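/- arXiv:2104.10060 — 2 statements merged into one kernel-verified Lean document; each statement's English description precedes it below -/
import Mathlib

section
/- Let g ≥ 1 be an integer and let Z be a positive definite real g×g matrix. Then the Voronoi region Vor(Z) = {β ∈ ℝ^g : nᵀZβ ≤ ½ nᵀZn for all n ∈ ℤ^g} has Lebesgue measure equal to 1 with respect to the standard Lebesgue measure on ℝ^g. -/
open Matrix MeasureTheory Submodule Pointwise

/-- The Voronoi region of a (positive definite) real `g×g` matrix `Z`:
`Vor(Z) = {β ∈ ℝ^g : nᵀZβ ≤ ½ nᵀZn for all n ∈ ℤ^g}`. -/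
def VorMatrix (g : ℕ) (Z : Matrix (Fin g) (Fin g) ℝ) : Set (Fin g → ℝ) :=
  {β | ∀ n : Fin g → ℤ,
    (fun i => (n i : ℝ)) ⬝ᵥ Z.mulVec β ≤
      (1 / 2) * ((fun i => (n i : ℝ)) ⬝ᵥ Z.mulVec (fun i => (n i : ℝ)))}

namespace VorAux
variable {g : ℕ} (Z : Matrix (Fin g) (Fin g) ℝ)

/-- quadratic form -/
def q (x : Fin g → ℝ) : ℝ := x ⬝ᵥ Z.mulVec x

/-- the linear functional x ↦ v ⬝ᵥ Z x -/
def fLin (v : Fin g → ℝ) : (Fin g → ℝ) →ₗ[ℝ] ℝ where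
  toFun x := v ⬝ᵥ Z.mulVec x
  map_add' x y := by simp only [mulVec_add, dotProduct_add]
  map_smul' c x := by simp only [mulVec_smul, dotProduct_smul, RingHom.id_apply, smul_eq_mul]

variable {Z}

lemma symm_dot (hZ : Z.IsHermitian) (x y : Fin g → ℝ) :
    x ⬝ᵥ Z.mulVec y = y ⬝ᵥ Z.mulVec x := by
  rw [dotProduct_mulVec, ← mulVec_transpose, dotProduct_comm]
  congr 1
  rw [show Zᵀ = Z from hZ]

lemma q_sub (hZ : Z.IsHermitian) (x y : Fin g → ℝ) :
    q Z (x - y) = q Z x - 2 * (y ⬝ᵥ Z.mulVec x) + q Z y := by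
  simp only [q, mulVec_sub, sub_dotProduct, dotProduct_sub]
  rw [symm_dot hZ x y]
  ring

lemma q_pos (hZ : Z.PosDef) {x : Fin g → ℝ} (hx : x ≠ 0) : 0 < q Z x := by
  have := hZ.dotProduct_mulVec_pos hx
  simpa [q] using this

lemma q_nonneg (hZ : Z.PosDef) (x : Fin g → ℝ) : 0 ≤ q Z x := by
  rcases eq_or_ne x 0 with h | h
  · simp [q, h]
  · exact (q_pos hZ h).le

lemma q_smul (c : ℝ) (x : Fin g → ℝ) : q Z (c • x) = c ^ 2 * q Z x := by
  simp only [q, mulVec_smul, dotProduct_smul, smul_dotProduct, smul_eq_mul]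
  ring

lemma continuous_q : Continuous (q Z) := by
  unfold q dotProduct mulVec
  exact continuous_finset_sum _ fun i _ => (continuous_apply i).mul
    (continuous_finset_sum _ fun j _ => continuous_const.mul (continuous_apply j))

end VorAux

namespace VorAux
variable {g : ℕ} {Z : Matrix (Fin g) (Fin g) ℝ}

lemma exists_coercive (hg : 1 ≤ g) (hZ : Z.PosDef) :
    ∃ c > 0, ∀ x : Fin g → ℝ, c * ‖x‖ ^ 2 ≤ q Z x := by
  haveI : Nonempty (Fin g) := ⟨⟨0, hg⟩⟩
  have hsne : (Metric.sphere (0 : Fin g → ℝ) 1).Nonempty := by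
    refine ⟨fun _ => 1, ?_⟩
    simp [pi_norm_const]
  obtain ⟨x₀, hx₀mem, hmin⟩ :=
    (isCompact_sphere (0 : Fin g → ℝ) 1).exists_isMinOn hsne (continuous_q (Z := Z)).continuousOn
  have hx₀norm : ‖x₀‖ = 1 := by simpa using hx₀mem
  have hx₀ne : x₀ ≠ 0 := by
    intro h; rw [h] at hx₀norm; simp at hx₀norm
  refine ⟨q Z x₀, q_pos hZ hx₀ne, fun x => ?_⟩
  rcases eq_or_ne x 0 with rfl | hx
  · simpa using q_nonneg hZ (0 : Fin g → ℝ)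
  have hxn : ‖x‖ ≠ 0 := norm_ne_zero_iff.mpr hx
  have hu : (‖x‖⁻¹ • x) ∈ Metric.sphere (0 : Fin g → ℝ) 1 := by
    simp [norm_smul, abs_of_nonneg (norm_nonneg x), inv_mul_cancel₀ hxn]
  have h1 : q Z x₀ ≤ q Z (‖x‖⁻¹ • x) := hmin hu
  have h2 : q Z (‖x‖⁻¹ • x) = (‖x‖⁻¹) ^ 2 * q Z x := q_smul _ _
  have h3 : (0:ℝ) < ‖x‖ ^ 2 := by positivity
  rw [h2] at h1
  have := mul_le_mul_of_nonneg_left h1 h3.le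
  calc q Z x₀ * ‖x‖ ^ 2 = ‖x‖ ^ 2 * q Z x₀ := by ring
    _ ≤ ‖x‖ ^ 2 * ((‖x‖⁻¹) ^ 2 * q Z x) := this
    _ = q Z x := by field_simp

lemma finite_S (hg : 1 ≤ g) (hZ : Z.PosDef) (β : Fin g → ℝ) :
    {n : Fin g → ℤ | q Z (β - fun i => (n i : ℝ)) ≤ q Z β}.Finite := by
  obtain ⟨c, hc, hcoer⟩ := exists_coercive hg hZ
  set R : ℝ := ‖β‖ + Real.sqrt (q Z β / c) with hR
  have key : ∀ n ∈ {n : Fin g → ℤ | q Z (β - fun i => (n i : ℝ)) ≤ q Z β},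
      ∀ i, n i ∈ Set.Icc (-⌈R⌉) ⌈R⌉ := by
    intro n hn i
    have h1 : c * ‖β - fun i => (n i : ℝ)‖ ^ 2 ≤ q Z β := le_trans (hcoer _) hn
    have h2 : ‖β - fun i => (n i : ℝ)‖ ^ 2 ≤ q Z β / c := by
      rw [le_div_iff₀ hc]; linarith
    have h3 : ‖β - fun i => (n i : ℝ)‖ ≤ Real.sqrt (q Z β / c) := by
      rw [show Real.sqrt (q Z β / c) = Real.sqrt (q Z β / c) from rfl]
      have := Real.sqrt_le_sqrt h2
      rwa [Real.sqrt_sq (norm_nonneg _)] at this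
    have h4 : ‖(fun i => (n i : ℝ) : Fin g → ℝ)‖ ≤ R := by
      have heq : (fun i => (n i : ℝ) : Fin g → ℝ) = β - (β - fun i => (n i : ℝ)) := by
        ext j; simp
      calc ‖(fun i => (n i : ℝ) : Fin g → ℝ)‖
          = ‖β - (β - fun i => (n i : ℝ))‖ := by rw [← heq]
        _ ≤ ‖β‖ + ‖β - fun i => (n i : ℝ)‖ := norm_sub_le _ _
        _ ≤ ‖β‖ + Real.sqrt (q Z β / c) := add_le_add_right h3 _
    have h5 : |(n i : ℝ)| ≤ R := by
      have := norm_le_pi_norm (fun i => (n i : ℝ) : Fin g → ℝ) i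
      simp only [Real.norm_eq_abs] at this
      linarith
    have h6 : |n i| ≤ ⌈R⌉ := by
      have : ((|n i| : ℤ) : ℝ) ≤ (⌈R⌉ : ℝ) := by
        rw [Int.cast_abs]; exact le_trans h5 (Int.le_ceil R)
      exact_mod_cast this
    rw [Set.mem_Icc, ← abs_le]
    exact h6
  exact Set.Finite.subset (Set.Finite.pi (fun _ => Set.finite_Icc (-⌈R⌉) ⌈R⌉))
    fun n hn => Set.mem_pi.mpr fun i _ => key n hn i

lemma null_level (f : (Fin g → ℝ) →ₗ[ℝ] ℝ) (hf : f ≠ 0) (c : ℝ) :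
    volume {x | f x = c} = 0 := by
  obtain ⟨y, hy⟩ : ∃ y, f y ≠ 0 := by
    by_contra h; push_neg at h; exact hf (LinearMap.ext fun x => by simp [h x])
  have hx₀ : f ((c / f y) • y) = c := by
    rw [f.map_smul, smul_eq_mul, div_mul_cancel₀ _ hy]
  set x₀ := (c / f y) • y
  have hker : LinearMap.ker f ≠ ⊤ := by
    intro h
    exact hy (by simpa using LinearMap.mem_ker.mp (h ▸ Submodule.mem_top : y ∈ LinearMap.ker f))
  have h0 : volume (LinearMap.ker f : Set (Fin g → ℝ)) = 0 :=
    Measure.addHaar_submodule _ _ hker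
  have hset : {x | f x = c} = x₀ +ᵥ (LinearMap.ker f : Set (Fin g → ℝ)) := by
    ext x
    rw [Set.mem_vadd_set_iff_neg_vadd_mem]
    simp only [SetLike.mem_coe, LinearMap.mem_ker, vadd_eq_add, Set.mem_setOf_eq, map_add,
      map_neg, hx₀]
    constructor
    · intro h; rw [h]; ring
    · intro h; linarith
  rw [hset, measure_vadd]
  exact h0

lemma mem_vor_iff (hZ : Z.IsHermitian) (β : Fin g → ℝ) :
    β ∈ VorMatrix g Z ↔ ∀ n : Fin g → ℤ, q Z β ≤ q Z (β - fun i => (n i : ℝ)) := by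
  unfold VorMatrix
  simp only [Set.mem_setOf_eq]
  refine forall_congr' fun n => ?_
  rw [q_sub hZ]
  show _ ↔ q Z β ≤ q Z β - 2 * _ + q Z _
  unfold q
  constructor <;> intro h <;> linarith

lemma mem_L (n : Fin g → ℤ) :
    (fun i => (n i : ℝ)) ∈ span ℤ (Set.range (Pi.basisFun ℝ (Fin g))) := by
  rw [Module.Basis.mem_span_iff_repr_mem]
  intro i
  exact ⟨n i, by simp⟩

lemma exists_int {x : Fin g → ℝ} (hx : x ∈ span ℤ (Set.range (Pi.basisFun ℝ (Fin g)))) :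
    ∃ n : Fin g → ℤ, (fun i => (n i : ℝ)) = x := by
  rw [Module.Basis.mem_span_iff_repr_mem] at hx
  choose n hn using hx
  exact ⟨n, funext fun i => by simpa using hn i⟩

end VorAux

namespace VorAux
variable {g : ℕ} {Z : Matrix (Fin g) (Fin g) ℝ}

lemma measurable_vor : MeasurableSet (VorMatrix g Z) := by
  have h : VorMatrix g Z = ⋂ n : Fin g → ℤ,
      {β | (fLin Z (fun i => (n i : ℝ))) β ≤
        (1 / 2) * ((fun i => (n i : ℝ)) ⬝ᵥ Z.mulVec (fun i => (n i : ℝ)))} := by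
    ext β
    simp only [VorMatrix, Set.mem_setOf_eq, Set.mem_iInter]
    exact Iff.rfl
  rw [h]
  exact MeasurableSet.iInter fun n =>
    measurableSet_le ((fLin Z _).continuous_of_finiteDimensional).measurable measurable_const

lemma cast_add (m n : Fin g → ℤ) :
    (fun i => ((m + n) i : ℝ)) = (fun i => (m i : ℝ)) + (fun i => (n i : ℝ)) := by
  ext i; simp [Pi.add_apply]

lemma vor_fd (hg : 1 ≤ g) (hZ : Z.PosDef) :
    IsAddFundamentalDomain (span ℤ (Set.range (Pi.basisFun ℝ (Fin g)))).toAddSubgroup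
      (VorMatrix g Z) volume := by
  constructor
  · exact measurable_vor.nullMeasurableSet
  · -- covering
    refine Filter.Eventually.of_forall fun β => ?_
    have h0mem : (0 : Fin g → ℤ) ∈ {n : Fin g → ℤ | q Z (β - fun i => (n i : ℝ)) ≤ q Z β} := by
      have hc0 : (fun i => (((0 : Fin g → ℤ) i : ℝ))) = (0 : Fin g → ℝ) := by ext i; simp
      simp only [Set.mem_setOf_eq, hc0, sub_zero, le_refl]
    obtain ⟨n₀, hn₀S, hmin⟩ := Set.exists_min_image
      {n : Fin g → ℤ | q Z (β - fun i => (n i : ℝ)) ≤ q Z β}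
      (fun n : Fin g → ℤ => q Z (β - fun i => (n i : ℝ))) (finite_S hg hZ β)
      ⟨0, h0mem⟩
    refine ⟨⟨-(fun i => ((n₀ i : ℝ))), neg_mem (mem_L n₀)⟩, ?_⟩
    show (-(fun i => ((n₀ i : ℝ)))) + β ∈ VorMatrix g Z
    rw [neg_add_eq_sub, mem_vor_iff hZ.1]
    intro m
    have hsub : (β - fun i => (n₀ i : ℝ)) - (fun i => (m i : ℝ))
        = β - fun i => ((n₀ + m) i : ℝ) := by
      rw [cast_add]; abel
    rw [hsub]
    by_cases h : q Z (β - fun i => ((n₀ + m) i : ℝ)) ≤ q Z β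
    · exact hmin (n₀ + m) h
    · push_neg at h
      exact le_trans hn₀S h.le
  · -- a.e. disjoint
    intro v w hvw
    have hd : ((w : Fin g → ℝ) - (v : Fin g → ℝ)) ∈
        span ℤ (Set.range (Pi.basisFun ℝ (Fin g))) := sub_mem w.2 v.2
    obtain ⟨n, hn⟩ := exists_int hd
    have hne : (fun i => (n i : ℝ)) ≠ 0 := by
      rw [hn, sub_ne_zero]
      exact fun h => hvw (Subtype.coe_injective h.symm)
    have hq : 0 < q Z (fun i => (n i : ℝ)) := q_pos hZ hne
    have hf : fLin Z (fun i => (n i : ℝ)) ≠ 0 := by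
      intro h
      have := congrArg (fun f => f (fun i => (n i : ℝ))) h
      simp only [LinearMap.zero_apply] at this
      rw [show (fLin Z (fun i => (n i : ℝ))) (fun i => (n i : ℝ))
        = q Z (fun i => (n i : ℝ)) from rfl] at this
      exact hq.ne' this
    refine measure_mono_null (fun x hx => ?_)
      (null_level (fLin Z (fun i => (n i : ℝ)))
        hf ((1 / 2) * q Z (fun i => (n i : ℝ)) + fLin Z (fun i => (n i : ℝ)) (v : Fin g → ℝ)))
    obtain ⟨hxv, hxw⟩ := hx
    rw [Set.mem_vadd_set_iff_neg_vadd_mem] at hxv hxw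
    have hy : (x - (v : Fin g → ℝ)) ∈ VorMatrix g Z := by
      have : (-v +ᵥ x) = x - (v : Fin g → ℝ) := by
        show -(v : Fin g → ℝ) + x = _; abel
      rwa [this] at hxv
    have hy' : (x - (v : Fin g → ℝ)) - (fun i => (n i : ℝ)) ∈ VorMatrix g Z := by
      have : (-w +ᵥ x) = (x - (v : Fin g → ℝ)) - (fun i => (n i : ℝ)) := by
        show -(w : Fin g → ℝ) + x = _; rw [hn]; abel
      rwa [this] at hxw
    set y := x - (v : Fin g → ℝ) with hy_def
    -- q y ≤ q (y - n)
    have h1 : q Z y ≤ q Z (y - fun i => (n i : ℝ)) := (mem_vor_iff hZ.1 y).mp hy n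
    -- q (y - n) ≤ q y
    have h2 : q Z (y - fun i => (n i : ℝ)) ≤ q Z y := by
      have := (mem_vor_iff hZ.1 _).mp hy' (-n)
      have hcast : ((y - fun i => (n i : ℝ)) - fun i => ((-n) i : ℝ)) = y := by
        ext i; simp
      rwa [hcast] at this
    have heq : q Z (y - fun i => (n i : ℝ)) = q Z y := le_antisymm h2 h1
    rw [q_sub hZ.1] at heq
    have hlin : (fun i => (n i : ℝ)) ⬝ᵥ Z.mulVec y = (1 / 2) * q Z (fun i => (n i : ℝ)) := by
      linarith
    show fLin Z (fun i => (n i : ℝ)) x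
      = (1 / 2) * q Z (fun i => (n i : ℝ)) + fLin Z (fun i => (n i : ℝ)) (v : Fin g → ℝ)
    have hx_eq : x = y + (v : Fin g → ℝ) := by rw [hy_def]; abel
    rw [hx_eq, map_add]
    rw [show (fLin Z (fun i => (n i : ℝ))) y = (fun i => (n i : ℝ)) ⬝ᵥ Z.mulVec y from rfl, hlin]

end VorAux

/-- For `g ≥ 1` and `Z` a positive definite real `g×g` matrix, the Voronoi
region `Vor(Z)` has Lebesgue measure `1` in `ℝ^g`. -/
theorem volume_VorMatrix_eq_one (g : ℕ) (hg : 1 ≤ g)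
    (Z : Matrix (Fin g) (Fin g) ℝ) (hZ : Z.PosDef) :
    volume (VorMatrix g Z) = 1 := by
  haveI : Countable (Submodule.span ℤ (Set.range ⇑(Pi.basisFun ℝ (Fin g)))).toAddSubgroup :=
    inferInstanceAs (Countable (Submodule.span ℤ (Set.range ⇑(Pi.basisFun ℝ (Fin g)))))
  have h1 := VorAux.vor_fd hg hZ
  have h2 := ZSpan.isAddFundamentalDomain' (Pi.basisFun ℝ (Fin g)) volume
  rw [h1.measure_eq h2, ZSpan.fundamentalDomain_pi_basisFun, volume_pi, Measure.pi_pi]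
  simp [Real.volume_Ico]
end

section
/- With A, B, Ω(u), r and g as in the setup, there exists a real constant c > 0 such that det Im Ω(u) / (Im u)^r converges to c as Im u → ∞, uniformly in Re u: for every ε > 0 there exists M > 0 such that |det Im Ω(u)/(Im u)^r − c| < ε for all u ∈ ℍ with Im u ≥ M. (Equivalently, writing t = exp(2πiu), one has det Im Ω(t) ∼ c′·(−log|t|)^r as t → 0 for a suitable c′ > 0.) -/
open Matrix Complex MeasureTheory

/-- In the nilpotent-orbit setup (`g = r + s ≥ 1`, `A = [[A₀,0],[0,0]]` with
`A₀` positive definite integral `r×r`, `B` bounded holomorphic on `𝔻` with symmetric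
values, `Ω(u) = A·u + B(exp(2πiu)) ∈ ℍ_g` for `u ∈ ℍ`, the lower-right block of `B(t)`
having positive definite imaginary part), there is a real constant `c > 0` such that
`det Im Ω(u) / (Im u)^r → c` as `Im u → ∞`, uniformly in `Re u`. -/
theorem det_im_Omega_asymptotics (r s : ℕ) (hg : 1 ≤ r + s)
    (A₀ : Matrix (Fin r) (Fin r) ℤ) (hA₀symm : A₀.IsSymm)
    (hA₀pos : (A₀.map fun k => (k : ℝ)).PosDef)
    (B : ℂ → Matrix (Fin r ⊕ Fin s) (Fin r ⊕ Fin s) ℂ)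
    (hBhol : ∀ i j, DifferentiableOn ℂ (fun t => B t i j) (Metric.ball (0 : ℂ) 1))
    (hBbdd : ∃ C : ℝ, ∀ t ∈ Metric.ball (0 : ℂ) 1, ∀ i j, ‖B t i j‖ ≤ C)
    (hBsymm : ∀ t ∈ Metric.ball (0 : ℂ) 1, (B t).IsSymm)
    (hB22 : ∀ t ∈ Metric.ball (0 : ℂ) 1, ((B t).toBlocks₂₂.map Complex.im).PosDef)
    (Ω : ℂ → Matrix (Fin r ⊕ Fin s) (Fin r ⊕ Fin s) ℂ)
    (hΩ : ∀ u : ℂ, Ω u =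
      u • Matrix.fromBlocks (A₀.map fun k => (k : ℂ)) 0 0 0 +
        B (Complex.exp (2 * (Real.pi : ℂ) * Complex.I * u)))
    (hΩsymm : ∀ u : ℂ, 0 < u.im → (Ω u).IsSymm)
    (hΩpos : ∀ u : ℂ, 0 < u.im → ((Ω u).map Complex.im).PosDef) :
    ∃ c : ℝ, 0 < c ∧
      ∀ ε : ℝ, 0 < ε → ∃ M : ℝ, 0 < M ∧ ∀ u : ℂ, 0 < u.im → M ≤ u.im →
        |((Ω u).map Complex.im).det / u.im ^ r - c| < ε := by
  classical
  -- the real block matrix `[[A₀,0],[0,0]]`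
  set Ar : Matrix (Fin r ⊕ Fin s) (Fin r ⊕ Fin s) ℝ :=
    Matrix.fromBlocks (A₀.map fun k => (k : ℝ)) 0 0 0 with hAr
  -- the rescaled matrix family, `v` playing the role of `1 / Im u`
  set Mm : ℝ → ℂ → Matrix (Fin r ⊕ Fin s) (Fin r ⊕ Fin s) ℝ :=
    fun v t => Matrix.of fun i j =>
      Ar i j + (Sum.elim (fun _ => v) (fun _ => (1 : ℝ)) i) * (B t i j).im with hMm
  -- key identity: det Im Ω(u) = (Im u)^r * det (Mm (Im u)⁻¹ t)
  have key : ∀ u : ℂ, 0 < u.im →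
      ((Ω u).map Complex.im).det
        = u.im ^ r * (Mm (u.im)⁻¹ (Complex.exp (2 * (Real.pi : ℂ) * Complex.I * u))).det := by
    intro u hu
    set t := Complex.exp (2 * (Real.pi : ℂ) * Complex.I * u) with ht
    have hentry : (Ω u).map Complex.im =
        Matrix.of fun i j =>
          (Sum.elim (fun _ => u.im) (fun _ => (1 : ℝ)) i) * (Mm (u.im)⁻¹ t) i j := by
      ext i j
      rw [hΩ u]
      cases i with
      | inl a =>
        cases j with
        | inl b =>
          simp only [Matrix.map_apply, Matrix.add_apply, Matrix.smul_apply, Matrix.of_apply,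
            hMm, hAr, Matrix.fromBlocks_apply₁₁, Matrix.map_apply, smul_eq_mul,
            Complex.add_im, Complex.mul_im, Complex.intCast_im, Complex.intCast_re,
            Sum.elim_inl, mul_zero, add_zero, ← ht]
          field_simp
          ring
        | inr b =>
          simp only [Matrix.map_apply, Matrix.add_apply, Matrix.smul_apply, Matrix.of_apply,
            hMm, hAr, Matrix.fromBlocks_apply₁₂, Matrix.zero_apply, smul_eq_mul,
            Complex.add_im, Complex.mul_im, Complex.zero_im, Complex.zero_re,
            Sum.elim_inl, mul_zero, zero_add, add_zero, ← ht]
          field_simp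
      | inr a =>
        cases j with
        | inl b =>
          simp only [Matrix.map_apply, Matrix.add_apply, Matrix.smul_apply, Matrix.of_apply,
            hMm, hAr, Matrix.fromBlocks_apply₂₁, Matrix.zero_apply, smul_eq_mul,
            Complex.add_im, Complex.mul_im, Complex.zero_im, Complex.zero_re,
            Sum.elim_inr, mul_zero, zero_add, add_zero, ← ht]
          ring
        | inr b =>
          simp only [Matrix.map_apply, Matrix.add_apply, Matrix.smul_apply, Matrix.of_apply,
            hMm, hAr, Matrix.fromBlocks_apply₂₂, Matrix.zero_apply, smul_eq_mul,
            Complex.add_im, Complex.mul_im, Complex.zero_im, Complex.zero_re,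
            Sum.elim_inr, mul_zero, zero_add, add_zero, ← ht]
          ring
    rw [hentry, Matrix.det_mul_column]
    congr 1
    rw [Fintype.prod_sum_type]
    simp
  -- continuity of the entries of `B` at `0`
  have hBcont : ∀ i j, ContinuousAt (fun z : ℂ => (B z i j).im) 0 := fun i j =>
    Complex.continuous_im.continuousAt.comp
      ((hBhol i j).continuousOn.continuousAt (Metric.ball_mem_nhds _ one_pos))
  -- continuity of the determinant of the family at `(0, 0)`
  have hMc : ContinuousAt (fun p : ℝ × ℂ => (Mm p.1 p.2).det) (0, 0) := by
    refine ContinuousAt.comp (Continuous.continuousAt continuous_id.matrix_det) ?_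
    refine continuousAt_pi.2 fun i => continuousAt_pi.2 fun j => ?_
    have h1 : ContinuousAt (fun p : ℝ × ℂ =>
        Sum.elim (fun _ : Fin r => p.1) (fun _ : Fin s => (1 : ℝ)) i) (0, 0) := by
      cases i with
      | inl a => exact continuousAt_fst
      | inr a => exact continuousAt_const
    have h2 : ContinuousAt (fun p : ℝ × ℂ => (B p.2 i j).im) (0, 0) :=
      ContinuousAt.comp (g := fun z : ℂ => (B z i j).im) (f := Prod.snd)
        (hBcont i j) continuousAt_snd
    exact continuousAt_const.add (h1.mul h2)
  -- the limit value and its positivity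
  have hM00 : Mm 0 0 = Matrix.fromBlocks (A₀.map fun k => (k : ℝ)) 0
      ((B 0).toBlocks₂₁.map Complex.im) ((B 0).toBlocks₂₂.map Complex.im) := by
    ext i j
    cases i <;> cases j <;>
      simp [hMm, hAr, Matrix.toBlocks₂₁, Matrix.toBlocks₂₂]
  have hcpos : 0 < (Mm 0 0).det := by
    rw [hM00, Matrix.det_fromBlocks_zero₁₂]
    exact mul_pos hA₀pos.det_pos (hB22 0 (by simp)).det_pos
  refine ⟨(Mm 0 0).det, hcpos, fun ε hε => ?_⟩
  obtain ⟨δ, hδ, hδ'⟩ := Metric.continuousAt_iff.1 hMc ε hε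
  refine ⟨max (1 / δ) 1 + 1, by positivity, fun u hu hMu => ?_⟩
  have hy : 1 / δ < u.im := by
    have := le_max_left (1 / δ) 1
    linarith
  have h1y : u.im⁻¹ < δ := by
    rw [← one_div]
    exact (one_div_lt hu hδ).2 hy
  set t := Complex.exp (2 * (Real.pi : ℂ) * Complex.I * u) with ht
  have habs_t : ‖t‖ < δ := by
    have hre : (2 * (Real.pi : ℂ) * Complex.I * u).re = -(2 * Real.pi * u.im) := by
      simp [Complex.mul_re, Complex.mul_im]
    rw [ht, Complex.norm_exp, hre]
    have h3 : u.im < Real.exp (2 * Real.pi * u.im) := by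
      nlinarith [Real.add_one_le_exp (2 * Real.pi * u.im),
        mul_le_mul_of_nonneg_right Real.pi_gt_three.le hu.le]
    have h4 : Real.exp (-(2 * Real.pi * u.im)) < u.im⁻¹ := by
      rw [Real.exp_neg]
      exact inv_strictAnti₀ hu h3
    exact h4.trans h1y
  have hdist : dist ((u.im⁻¹, t) : ℝ × ℂ) (0, 0) < δ := by
    rw [Prod.dist_eq]
    refine max_lt ?_ ?_
    · rw [Real.dist_eq, sub_zero, abs_of_pos (by positivity)]
      exact h1y
    · rw [Complex.dist_eq, sub_zero]
      exact habs_t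
  have hfin := hδ' hdist
  rw [Real.dist_eq] at hfin
  rw [key u hu, ← ht, mul_div_cancel_left₀ _ (pow_ne_zero r hu.ne')]
  exact hfin
end
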